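/- For every k ≥ 1 and n ≥ 1, substituting the power sum polynomial s_i in n variables for the variable x_i in the Cauchy polynomial j_k yields k! times the elementary symmetric polynomial of degree k in n variables: j_k(s_1, s_2, …, s_k) = k! · c_k. -/

import Mathlib

open MvPolynomial

/-- The unique `ℚ`-linear derivation `δ` of `ℚ[x₁, x₂, …]` with `δ xₖ = k · xₖ₊₁`. -/
noncomputable def δ : Derivation ℚ (MvPolynomial ℕ ℚ) (MvPolynomial ℕ ℚ) :=
  mkDerivation ℚ fun k => (k : MvPolynomial ℕ ℚ) * X (k + 1)

/-- The Cauchy polynomials: `j 1 = x₁` and `j (k+1) = x₁ · j k − δ (j k)`.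
(The value at `0` is a harmless base case making the recursion valid.) -/
noncomputable def cauchyJ : ℕ → MvPolynomial ℕ ℚ
  | 0 => 1
  | k + 1 => X 1 * cauchyJ k - δ (cauchyJ k)

open Finset

noncomputable def Dn (n : ℕ) : Derivation ℚ (MvPolynomial (Fin n) ℚ) (MvPolynomial (Fin n) ℚ) :=
  mkDerivation ℚ fun j => X j ^ 2

lemma Dn_X (n : ℕ) (j : Fin n) : Dn n (X j) = X j ^ 2 := mkDerivation_X _ _ _

lemma Dn_psum (n i : ℕ) :
    Dn n (psum (Fin n) ℚ i) = (i : MvPolynomial (Fin n) ℚ) * psum (Fin n) ℚ (i+1) := by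
  rcases Nat.eq_zero_or_pos i with h | h
  · simp [h, psum]
  · simp only [psum, map_sum, Derivation.leibniz_pow, Dn_X, Finset.mul_sum]
    refine Finset.sum_congr rfl fun j _ => ?_
    rw [nsmul_eq_mul, smul_eq_mul, ← pow_add]
    congr 2
    omega

lemma Dn_prod (n : ℕ) (S : Finset (Fin n)) :
    Dn n (∏ i ∈ S, X i) = (∑ j ∈ S, X j) * ∏ i ∈ S, (X i : MvPolynomial (Fin n) ℚ) := by
  induction S using Finset.induction with
  | empty => simp
  | insert a s ha ih =>
    rw [Finset.prod_insert ha, Derivation.leibniz, ih, Finset.sum_insert ha, Dn_X,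
      smul_eq_mul, smul_eq_mul]
    ring

lemma δ_X (i : ℕ) : δ (X i) = (i : MvPolynomial ℕ ℚ) * X (i + 1) := mkDerivation_X _ _ _

lemma aeval_delta (n : ℕ) (p : MvPolynomial ℕ ℚ) :
    aeval (fun i : ℕ => psum (Fin n) ℚ i) (δ p) =
      Dn n (aeval (fun i : ℕ => psum (Fin n) ℚ i) p) := by
  induction p using MvPolynomial.induction_on with
  | C a => simp [derivation_C]
  | add p q hp hq => simp only [map_add, hp, hq]
  | mul_X p i hp =>
    simp only [Derivation.leibniz, smul_eq_mul, map_add, map_mul, aeval_X, hp, δ_X, Dn_psum,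
      map_natCast]

lemma key (n k : ℕ) :
    psum (Fin n) ℚ 1 * esymm (Fin n) ℚ k - Dn n (esymm (Fin n) ℚ k) =
      ((k : MvPolynomial (Fin n) ℚ) + 1) * esymm (Fin n) ℚ (k + 1) := by
  rw [esymm, esymm, map_sum, Finset.mul_sum, ← Finset.sum_sub_distrib]
  have lhs : ∀ S ∈ powersetCard k (univ : Finset (Fin n)),
      psum (Fin n) ℚ 1 * ∏ i ∈ S, X i - Dn n (∏ i ∈ S, X i) =
        ∑ j ∈ Sᶜ, X j * ∏ i ∈ S, X i := by
    intro S _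
    rw [Dn_prod, psum_one, ← Finset.sum_add_sum_compl S fun i => (X i : MvPolynomial (Fin n) ℚ)]
    conv_rhs => rw [← Finset.sum_mul]
    ring
  rw [Finset.sum_congr rfl lhs]
  have rhs : ∀ T ∈ powersetCard (k+1) (univ : Finset (Fin n)),
      ((k : MvPolynomial (Fin n) ℚ) + 1) * ∏ i ∈ T, X i =
        ∑ j ∈ T, ∏ i ∈ T, (X i : MvPolynomial (Fin n) ℚ) := by
    intro T hT
    rw [Finset.sum_const, Finset.mem_powersetCard_univ.mp hT, nsmul_eq_mul]
    push_cast
    ring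
  rw [Finset.mul_sum, Finset.sum_congr rfl rhs, Finset.sum_sigma', Finset.sum_sigma']
  refine Finset.sum_nbij' (fun x => ⟨insert x.2 x.1, x.2⟩) (fun y => ⟨y.1.erase y.2, y.2⟩)
    ?_ ?_ ?_ ?_ ?_
  · rintro ⟨S, j⟩ hx
    simp only [Finset.mem_sigma, Finset.mem_powersetCard_univ, Finset.mem_compl] at hx ⊢
    refine ⟨?_, Finset.mem_insert_self _ _⟩
    rw [Finset.card_insert_of_notMem hx.2, hx.1]
  · rintro ⟨T, j⟩ hy
    simp only [Finset.mem_sigma, Finset.mem_powersetCard_univ, Finset.mem_compl] at hy ⊢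
    refine ⟨?_, Finset.notMem_erase _ _⟩
    rw [Finset.card_erase_of_mem hy.2, hy.1]
    omega
  · rintro ⟨S, j⟩ hx
    simp only [Finset.mem_sigma, Finset.mem_powersetCard_univ, Finset.mem_compl] at hx
    simp [Finset.erase_insert hx.2]
  · rintro ⟨T, j⟩ hy
    simp only [Finset.mem_sigma, Finset.mem_powersetCard_univ, Finset.mem_compl] at hy
    simp [Finset.insert_erase hy.2]
  · rintro ⟨S, j⟩ hx
    simp only [Finset.mem_sigma, Finset.mem_powersetCard_univ, Finset.mem_compl] at hx
    rw [Finset.prod_insert hx.2]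

/-- Substituting the power sum `sᵢ` in `n` variables for the variable `xᵢ` in the Cauchy
polynomial `jₖ` yields `k!` times the elementary symmetric polynomial of degree `k`:
`jₖ (s₁, …, sₖ) = k! · cₖ`. -/
theorem aeval_psum_cauchyJ (k n : ℕ) (hk : 1 ≤ k) (hn : 1 ≤ n) :
    aeval (fun i : ℕ => psum (Fin n) ℚ i) (cauchyJ k) =
      (k.factorial : MvPolynomial (Fin n) ℚ) * esymm (Fin n) ℚ k := by
  induction k, hk using Nat.le_induction with
  | base =>
    show aeval _ (X 1 * cauchyJ 0 - δ (cauchyJ 0)) = _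
    show aeval _ (X 1 * 1 - δ 1) = _
    rw [mul_one, Derivation.map_one_eq_zero, sub_zero, aeval_X]
    simp [psum_one, esymm_one, Nat.factorial]
  | succ k hk ih =>
    show aeval _ (X 1 * cauchyJ k - δ (cauchyJ k)) = _
    rw [map_sub, map_mul, aeval_X, aeval_delta, ih]
    have hD : Dn n ((k.factorial : MvPolynomial (Fin n) ℚ) * esymm (Fin n) ℚ k)
        = (k.factorial : MvPolynomial (Fin n) ℚ) * Dn n (esymm (Fin n) ℚ k) := by
      rw [Derivation.leibniz, Derivation.map_natCast, smul_eq_mul, smul_eq_mul, mul_zero,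
        add_zero]
    rw [hD, Nat.factorial_succ]
    push_cast
    linear_combination (k.factorial : MvPolynomial (Fin n) ℚ) * key n k
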